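/- Consider the copositive program min_{W ∈ Δ^p} Tr(C W) subject to 𝒜W = v. Let β₀ > 0, and for t = 1, 2, … set β_t = β₀√(t+1) and η_t = 2/(t+1). Let W₁ ∈ Δ^p and y₁ ∈ ℝ^d, and for each t ≥ 1 define: G_t = C + 𝒜ᵀy_t + β_t 𝒜ᵀ(𝒜W_t − v); H_t ∈ Δ^p any minimizer of W ↦ Tr(G_t W) over Δ^p; W_{t+1} = (1 − η_t) W_t + η_t H_t; g_t = 𝒜W_{t+1} − v; and y_{t+1} = y_t + γ_t g_t where γ_t ≥ 0 satisfies γ_t‖g_t‖² ≤ β_t η_t² p² ‖𝒜‖². Assume there exists W⋆ ∈ Δ^p with 𝒜W⋆ = v minimizing Tr(C W) over {W ∈ Δ^p : 𝒜W = v}, that strong duality holds in the sense that there exists y⋆ ∈ ℝ^d with Tr(C W⋆) ≤ Tr(C W) + y⋆ᵀ(𝒜W − v) for all W ∈ Δ^p, and that there is D < ∞ with ‖y_t‖ ≤ D for all t and ‖y⋆‖ ≤ D. Then for every t ≥ 2, ‖𝒜W_t − v‖ ≤ (1/√t)(2√3 p ‖𝒜‖ + 4D/β₀). -/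

import Mathlib

open scoped BigOperators

noncomputable section

/-- A binary (0/1-valued) vector. -/
def binaryVec {ι : Type*} (x : ι → ℝ) : Prop := ∀ i, x i = 0 ∨ x i = 1

/-- `Δ^p`: the convex hull of the rank-one binary matrices `x xᵀ`, `x ∈ {0,1}^p`. -/
def CPdelta (ι : Type*) [Fintype ι] : Set (Matrix ι ι ℝ) :=
  convexHull ℝ {M | ∃ x : ι → ℝ, binaryVec x ∧ M = Matrix.vecMulVec x x}

/-- Frobenius inner ℝ product of matrices. -/
def frobInner {ι : Type*} [Fintype ι] (A B : Matrix ι ι ℝ) : ℝ := ∑ i, ∑ j, A i j * B i j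

/-- Frobenius norm of a matrix. -/
def frobNorm {ι : Type*} [Fintype ι] (A : Matrix ι ι ℝ) : ℝ :=
  Real.sqrt (∑ i, ∑ j, (A i j) ^ 2)

/-- Operator norm `‖𝒜‖ = sup {‖𝒜X‖ : ‖X‖_F ≤ 1}` of a linear map from matrices
(with the Frobenius norm) to `ℝ^d` (with the Euclidean norm). -/
def opNorm {p d : ℕ} (A : Matrix (Fin p) (Fin p) ℝ →ₗ[ℝ] EuclideanSpace ℝ (Fin d)) : ℝ :=
  sSup {r : ℝ | ∃ X : Matrix (Fin p) (Fin p) ℝ, frobNorm X ≤ 1 ∧ r = ‖A X‖}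

/- ### Auxiliary lemmas -/

lemma mem_cpdelta_entry {ι : Type*} [Fintype ι] {W : Matrix ι ι ℝ} (h : W ∈ CPdelta ι) :
    ∀ i j, 0 ≤ W i j ∧ W i j ≤ 1 := by
  have hsub : CPdelta ι ⊆ {M | ∀ i j, 0 ≤ M i j ∧ M i j ≤ 1} := by
    apply convexHull_min
    · rintro M ⟨x, hx, rfl⟩ i j
      rw [Matrix.vecMulVec_apply]
      rcases hx i with h1 | h1 <;> rcases hx j with h2 | h2 <;> rw [h1, h2] <;> norm_num
    · intro X hX Y hY a b ha hb hab i j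
      have h1 := hX i j
      have h2 := hY i j
      have : (a • X + b • Y) i j = a * X i j + b * Y i j := by
        simp [Matrix.add_apply, Matrix.smul_apply]
      rw [this]
      constructor
      · nlinarith [h1.1, h2.1]
      · nlinarith [h1.2, h2.2]
  exact hsub h

lemma mem_cpdelta_symm {ι : Type*} [Fintype ι] {W : Matrix ι ι ℝ} (h : W ∈ CPdelta ι) :
    ∀ i j, W i j = W j i := by
  have hsub : CPdelta ι ⊆ {M | ∀ i j, M i j = M j i} := by
    apply convexHull_min
    · rintro M ⟨x, hx, rfl⟩ i j
      rw [Matrix.vecMulVec_apply, Matrix.vecMulVec_apply, mul_comm]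
    · intro X hX Y hY a b ha hb hab i j
      have : ∀ k l, (a • X + b • Y) k l = a * X k l + b * Y k l := by
        intro k l; simp [Matrix.add_apply, Matrix.smul_apply]
      rw [this, this, hX i j, hY i j]
  exact hsub h

lemma cpdelta_convex (ι : Type*) [Fintype ι] : Convex ℝ (CPdelta ι) :=
  convex_convexHull ℝ _

lemma abs_entry_le_frobNorm {ι : Type*} [Fintype ι] (X : Matrix ι ι ℝ) (i j : ι) :
    |X i j| ≤ frobNorm X := by
  have h1 : (X i j) ^ 2 ≤ ∑ i', ∑ j', (X i' j') ^ 2 := by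
    calc (X i j) ^ 2 ≤ ∑ j', (X i j') ^ 2 :=
          Finset.single_le_sum (fun k _ => sq_nonneg (X i k)) (Finset.mem_univ j)
      _ ≤ ∑ i', ∑ j', (X i' j') ^ 2 :=
          Finset.single_le_sum (fun k _ => Finset.sum_nonneg fun l _ => sq_nonneg (X k l))
            (Finset.mem_univ i)
  calc |X i j| = Real.sqrt ((X i j) ^ 2) := (Real.sqrt_sq_eq_abs _).symm
    _ ≤ frobNorm X := Real.sqrt_le_sqrt h1

lemma opNorm_bddAbove {p d : ℕ} (A : Matrix (Fin p) (Fin p) ℝ →ₗ[ℝ] EuclideanSpace ℝ (Fin d)) :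
    BddAbove {r : ℝ | ∃ X : Matrix (Fin p) (Fin p) ℝ, frobNorm X ≤ 1 ∧ r = ‖A X‖} := by
  refine ⟨∑ i : Fin p, ∑ j : Fin p, ‖A (Matrix.single i j 1)‖, ?_⟩
  rintro r ⟨X, hX, rfl⟩
  have hXd : X = ∑ i, ∑ j, X i j • Matrix.single i j (1:ℝ) := by
    conv_lhs => rw [Matrix.matrix_eq_sum_single X]
    simp [Matrix.smul_single]
  calc ‖A X‖ = ‖∑ i, ∑ j, X i j • A (Matrix.single i j 1)‖ := by
        congr 1
        conv_lhs => rw [hXd]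
        simp only [map_sum, map_smul]
    _ ≤ ∑ i, ‖∑ j, X i j • A (Matrix.single i j 1)‖ := norm_sum_le _ _
    _ ≤ ∑ i : Fin p, ∑ j : Fin p, ‖A (Matrix.single i j 1)‖ := by
        refine Finset.sum_le_sum fun i _ => ?_
        refine (norm_sum_le _ _).trans (Finset.sum_le_sum fun j _ => ?_)
        rw [norm_smul]
        have habs : |X i j| ≤ 1 := (abs_entry_le_frobNorm X i j).trans hX
        calc ‖X i j‖ * ‖A (Matrix.single i j 1)‖
            ≤ 1 * ‖A (Matrix.single i j 1)‖ := by
              apply mul_le_mul_of_nonneg_right _ (norm_nonneg _)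
              simpa [Real.norm_eq_abs] using habs
          _ = _ := one_mul _

lemma opNorm_nonneg {p d : ℕ} (A : Matrix (Fin p) (Fin p) ℝ →ₗ[ℝ] EuclideanSpace ℝ (Fin d)) :
    0 ≤ opNorm A := by
  apply le_csSup (opNorm_bddAbove A)
  exact ⟨0, by simp [frobNorm], by simp⟩

lemma norm_apply_le_of_entries {p d : ℕ} (hp : 0 < p)
    (A : Matrix (Fin p) (Fin p) ℝ →ₗ[ℝ] EuclideanSpace ℝ (Fin d))
    (X : Matrix (Fin p) (Fin p) ℝ) (hX : ∀ i j, |X i j| ≤ 1) :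
    ‖A X‖ ≤ (p : ℝ) * opNorm A := by
  have hp' : (0:ℝ) < p := by exact_mod_cast hp
  set Y : Matrix (Fin p) (Fin p) ℝ := ((p : ℝ)⁻¹) • X with hY
  have hYfrob : frobNorm Y ≤ 1 := by
    rw [frobNorm]
    rw [show (1:ℝ) = Real.sqrt 1 by simp]
    apply Real.sqrt_le_sqrt
    have : ∀ i j : Fin p, (Y i j) ^ 2 ≤ (p:ℝ)⁻¹ ^ 2 := by
      intro i j
      have : Y i j = (p:ℝ)⁻¹ * X i j := by simp [hY, Matrix.smul_apply]
      rw [this, mul_pow]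
      have h1 : (X i j)^2 ≤ 1 := by
        have := hX i j
        nlinarith [abs_nonneg (X i j), sq_abs (X i j)]
      nlinarith [sq_nonneg ((p:ℝ)⁻¹)]
    calc ∑ i : Fin p, ∑ j : Fin p, (Y i j) ^ 2
        ≤ ∑ i : Fin p, ∑ j : Fin p, (p:ℝ)⁻¹ ^ 2 :=
          Finset.sum_le_sum fun i _ => Finset.sum_le_sum fun j _ => this i j
      _ = (p:ℝ)^2 * ((p:ℝ)⁻¹)^2 := by
          simp [Finset.sum_const]; ring
      _ = 1 := by field_simp
  have hmem : ‖A Y‖ ∈ {r : ℝ | ∃ X : Matrix (Fin p) (Fin p) ℝ, frobNorm X ≤ 1 ∧ r = ‖A X‖} :=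
    ⟨Y, hYfrob, rfl⟩
  have hle : ‖A Y‖ ≤ opNorm A := le_csSup (opNorm_bddAbove A) hmem
  have hXY : X = (p : ℝ) • Y := by
    rw [hY, smul_smul]
    field_simp
    rw [one_smul]
  calc ‖A X‖ = ‖A ((p:ℝ) • Y)‖ := by rw [← hXY]
    _ = (p:ℝ) * ‖A Y‖ := by rw [map_smul, norm_smul, Real.norm_eq_abs, abs_of_pos hp']
    _ ≤ (p:ℝ) * opNorm A := by nlinarith

lemma quad_bound {a b c r : ℝ} (ha : 0 < a) (hb : 0 ≤ b) (hc : 0 ≤ c) (hr : 0 ≤ r)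
    (h : a * r ^ 2 ≤ b * r + c) : r ≤ b / a + Real.sqrt (c / a) := by
  by_contra hcon
  push_neg at hcon
  set s := Real.sqrt (c / a) with hs
  have hs0 : 0 ≤ s := Real.sqrt_nonneg _
  have hs2 : s ^ 2 = c / a := Real.sq_sqrt (by positivity)
  have hca : a * s ^ 2 = c := by rw [hs2]; field_simp
  have hba : 0 ≤ b / a := by positivity
  have hr0 : 0 < r := lt_of_le_of_lt (by positivity) hcon
  have hsr : s ≤ r := le_of_lt (lt_of_le_of_lt (le_add_of_nonneg_left hba) hcon)
  have h1 : r ^ 2 > (b/a)*r + s*r := by nlinarith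
  have h2 : s*r ≥ s^2 := by nlinarith
  have h3 : r^2 > (b/a)*r + s^2 := by linarith
  have h4 := mul_lt_mul_of_pos_left h3 ha
  have hba2 : a * ((b/a)*r + s^2) = b*r + a*s^2 := by field_simp
  nlinarith

lemma euclid_inner {d : ℕ} (z w : EuclideanSpace ℝ (Fin d)) :
    (inner ℝ z w : ℝ) = ∑ i, z i * w i := by
  simp [PiLp.inner_apply, RCLike.inner_apply, mul_comm]

lemma trace_adj_mul {p d : ℕ}
    (A : Matrix (Fin p) (Fin p) ℝ →ₗ[ℝ] EuclideanSpace ℝ (Fin d))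
    (Aadj : EuclideanSpace ℝ (Fin d) →ₗ[ℝ] Matrix (Fin p) (Fin p) ℝ)
    (hadj : ∀ (X : Matrix (Fin p) (Fin p) ℝ) (z : EuclideanSpace ℝ (Fin d)),
      (∑ i, A X i * z i) = frobInner (Aadj z) X)
    (z : EuclideanSpace ℝ (Fin d)) (X : Matrix (Fin p) (Fin p) ℝ)
    (hX : ∀ i j, X i j = X j i) :
    Matrix.trace (Aadj z * X) = (inner ℝ z (A X) : ℝ) := by
  have h1 : Matrix.trace (Aadj z * X) = ∑ i, ∑ j, (Aadj z) i j * X j i := by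
    rw [Matrix.trace]
    simp [Matrix.diag, Matrix.mul_apply]
  rw [h1, euclid_inner]
  have h2 : ∑ i, ∑ j, (Aadj z) i j * X j i = frobInner (Aadj z) X := by
    rw [frobInner]
    exact Finset.sum_congr rfl fun i _ => Finset.sum_congr rfl fun j _ => by rw [hX j i]
  rw [h2, ← hadj X z]
  exact Finset.sum_congr rfl fun i _ => mul_comm _ _

/-- The augmented Lagrangian. -/
def Lagr {p d : ℕ} (C : Matrix (Fin p) (Fin p) ℝ)
    (A : Matrix (Fin p) (Fin p) ℝ →ₗ[ℝ] EuclideanSpace ℝ (Fin d))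
    (v : EuclideanSpace ℝ (Fin d)) (b : ℝ) (X : Matrix (Fin p) (Fin p) ℝ)
    (z : EuclideanSpace ℝ (Fin d)) : ℝ :=
  Matrix.trace (C * X) + (inner ℝ z (A X - v) : ℝ) + b / 2 * ‖A X - v‖ ^ 2


set_option maxHeartbeats 4000000 in
/-- FWAL infeasibility error, Proposition 1 of Q-FW.
Under the FWAL iteration with `β_t = β₀√(t+1)`, `η_t = 2/(t+1)`, assuming a feasible
minimizer `W⋆`, strong duality, and bounded dual iterates, the infeasibility decays
as `O(1/√t)`. -/
theorem fwal_infeasibility_error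
    {p d : ℕ} (hp : 0 < p)
    (C : Matrix (Fin p) (Fin p) ℝ) (hC : C.IsSymm)
    (A : Matrix (Fin p) (Fin p) ℝ →ₗ[ℝ] EuclideanSpace ℝ (Fin d))
    (Aadj : EuclideanSpace ℝ (Fin d) →ₗ[ℝ] Matrix (Fin p) (Fin p) ℝ)
    (hadj : ∀ (X : Matrix (Fin p) (Fin p) ℝ) (z : EuclideanSpace ℝ (Fin d)),
      (∑ i, A X i * z i) = frobInner (Aadj z) X)
    (v : EuclideanSpace ℝ (Fin d))
    (β₀ : ℝ) (hβ₀ : 0 < β₀)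
    (W : ℕ → Matrix (Fin p) (Fin p) ℝ)
    (y : ℕ → EuclideanSpace ℝ (Fin d))
    (H : ℕ → Matrix (Fin p) (Fin p) ℝ)
    (γ : ℕ → ℝ)
    (hW1 : W 1 ∈ CPdelta (Fin p))
    -- `H t` is a minimizer over `Δ^p` of `Z ↦ Tr (G_t Z)`, where
    -- `G_t = C + 𝒜ᵀ y_t + β_t 𝒜ᵀ (𝒜 W_t - v)` and `β_t = β₀ √(t+1)`
    (hHmem : ∀ t, 1 ≤ t → H t ∈ CPdelta (Fin p))
    (hHmin : ∀ t, 1 ≤ t → ∀ Z ∈ CPdelta (Fin p),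
      Matrix.trace
        ((C + Aadj (y t) + (β₀ * Real.sqrt ((t : ℝ) + 1)) • Aadj (A (W t) - v)) * H t) ≤
      Matrix.trace
        ((C + Aadj (y t) + (β₀ * Real.sqrt ((t : ℝ) + 1)) • Aadj (A (W t) - v)) * Z))
    -- primal update with step-size `η_t = 2/(t+1)`
    (hWupd : ∀ t, 1 ≤ t →
      W (t + 1) = (1 - 2 / ((t : ℝ) + 1)) • W t + (2 / ((t : ℝ) + 1)) • H t)
    -- dual step-size condition `γ_t ≥ 0`, `γ_t ‖g_t‖² ≤ β_t η_t² p² ‖𝒜‖²`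
    (hγ0 : ∀ t, 1 ≤ t → 0 ≤ γ t)
    (hγ : ∀ t, 1 ≤ t →
      γ t * ‖A (W (t + 1)) - v‖ ^ 2 ≤
        (β₀ * Real.sqrt ((t : ℝ) + 1)) * (2 / ((t : ℝ) + 1)) ^ 2 * (p : ℝ) ^ 2 * opNorm A ^ 2)
    -- dual update `y_{t+1} = y_t + γ_t g_t` with `g_t = 𝒜 W_{t+1} - v`
    (hyupd : ∀ t, 1 ≤ t → y (t + 1) = y t + γ t • (A (W (t + 1)) - v))
    (Wstar : Matrix (Fin p) (Fin p) ℝ)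
    (hWstar : Wstar ∈ CPdelta (Fin p)) (hfeas : A Wstar = v)
    -- `W⋆` minimizes `Tr(C W)` over the feasible set
    (hmin : ∀ Z ∈ CPdelta (Fin p), A Z = v →
      Matrix.trace (C * Wstar) ≤ Matrix.trace (C * Z))
    -- strong duality: a dual optimal `y⋆`
    (ystar : EuclideanSpace ℝ (Fin d))
    (hdual : ∀ Z ∈ CPdelta (Fin p),
      Matrix.trace (C * Wstar) ≤ Matrix.trace (C * Z) + ∑ i, ystar i * (A Z - v) i)
    -- bounded effective dual domain
    (D : ℝ) (hyD : ∀ t, 1 ≤ t → ‖y t‖ ≤ D) (hystarD : ‖ystar‖ ≤ D) :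
    ∀ t, 2 ≤ t →
      ‖A (W t) - v‖ ≤
        (1 / Real.sqrt (t : ℝ)) *
          (2 * Real.sqrt 3 * (p : ℝ) * opNorm A + 4 * D / β₀) := by
  have hA0 := opNorm_nonneg A
  set M : ℝ := (p:ℝ)^2 * opNorm A ^ 2 with hMdef
  have hM0 : 0 ≤ M := by positivity
  set K : ℝ := 6 * β₀ * M with hKdef
  have hK0 : 0 ≤ K := by positivity
  set fS : ℝ := Matrix.trace (C * Wstar) with hfSdef
  -- All iterates remain in Δ^p
  have hWmem : ∀ s, 1 ≤ s → W s ∈ CPdelta (Fin p) := by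
    intro s hs
    induction s with
    | zero => omega
    | succ m ih =>
      rcases Nat.eq_zero_or_pos m with rfl | hm
      · exact hW1
      · rw [hWupd m hm]
        have hm1 : (1:ℝ) ≤ (m:ℝ) := by exact_mod_cast hm
        have h1 : (0:ℝ) ≤ 1 - 2/((m:ℝ)+1) := by
          have : 2/((m:ℝ)+1) ≤ 1 := by rw [div_le_one (by linarith)]; linarith
          linarith
        have h2 : (0:ℝ) ≤ 2/((m:ℝ)+1) := by positivity
        exact cpdelta_convex (Fin p) (ih hm) (hHmem m hm) h1 h2 (by ring)
  -- one-step recursion for the Lagrangian error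
  have hstep : ∀ n : ℕ, 1 ≤ n →
      Lagr C A v (β₀ * Real.sqrt ((n:ℝ)+1)) (W (n+1)) (y (n+1)) - fS ≤
        (1 - 2/((n:ℝ)+1)) * (Lagr C A v (β₀ * Real.sqrt (n:ℝ)) (W n) (y n) - fS)
          + 6*β₀*M/(((n:ℝ)+1)*Real.sqrt ((n:ℝ)+1)) := by
    intro n hn
    have hn1 : (1:ℝ) ≤ (n:ℝ) := by exact_mod_cast hn
    have hsqpos : 0 < Real.sqrt ((n:ℝ)+1) := Real.sqrt_pos.mpr (by linarith)
    have hsq : Real.sqrt ((n:ℝ)+1) * Real.sqrt ((n:ℝ)+1) = (n:ℝ)+1 :=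
      Real.mul_self_sqrt (by linarith)
    have hsq' : Real.sqrt (n:ℝ) * Real.sqrt (n:ℝ) = (n:ℝ) :=
      Real.mul_self_sqrt (by linarith)
    set η : ℝ := 2/((n:ℝ)+1) with hηdef
    set b : ℝ := β₀ * Real.sqrt ((n:ℝ)+1) with hbdef
    set b' : ℝ := β₀ * Real.sqrt (n:ℝ) with hb'def
    have hη0 : (0:ℝ) < η := by rw [hηdef]; positivity
    have hη1 : η ≤ 1 := by rw [hηdef, div_le_one (by linarith)]; linarith
    have hb0 : 0 < b := by rw [hbdef]; positivity
    have hupd := hWupd n hn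
    rw [← hηdef] at hupd
    have hup : A (W (n+1)) - v = (A (W n) - v) + η • (A (H n) - A (W n)) := by
      rw [hupd, map_add, map_smul, map_smul]
      module
    have htr : Matrix.trace (C * W (n+1))
        = (1-η) * Matrix.trace (C * W n) + η * Matrix.trace (C * H n) := by
      rw [hupd, Matrix.mul_add, Matrix.mul_smul, Matrix.mul_smul, Matrix.trace_add,
        Matrix.trace_smul, Matrix.trace_smul, smul_eq_mul, smul_eq_mul]
    have hnorm : ‖(A (W n) - v) + η • (A (H n) - A (W n))‖^2
        = ‖A (W n) - v‖^2 + 2*η*(inner ℝ (A (W n) - v) (A (H n) - A (W n)) : ℝ)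
          + η^2*‖A (H n) - A (W n)‖^2 := by
      have hsm : ‖η • (A (H n) - A (W n))‖ ^ 2 = η^2 * ‖A (H n) - A (W n)‖^2 := by
        rw [norm_smul, mul_pow, Real.norm_eq_abs, sq_abs]
      rw [norm_add_sq_real, real_inner_smul_right, hsm]
      ring
    have hHsym := mem_cpdelta_symm (hHmem n hn)
    have hWSsym := mem_cpdelta_symm hWstar
    have hGexp : ∀ (X : Matrix (Fin p) (Fin p) ℝ), (∀ i j, X i j = X j i) →
        Matrix.trace ((C + Aadj (y n) + b • Aadj (A (W n) - v)) * X) =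
          Matrix.trace (C * X) + (inner ℝ (y n) (A X) : ℝ)
            + b * (inner ℝ (A (W n) - v) (A X) : ℝ) := by
      intro X hX
      rw [Matrix.add_mul, Matrix.add_mul, Matrix.smul_mul, Matrix.trace_add, Matrix.trace_add,
        Matrix.trace_smul, trace_adj_mul A Aadj hadj (y n) X hX,
        trace_adj_mul A Aadj hadj (A (W n) - v) X hX, smul_eq_mul]
    have hmin' := hHmin n hn Wstar hWstar
    rw [← hbdef] at hmin'
    rw [hGexp (H n) hHsym, hGexp Wstar hWSsym, hfeas, ← hfSdef] at hmin'
    have hbr : Matrix.trace (C * H n) - Matrix.trace (C * W n)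
        + (inner ℝ (y n) (A (H n) - A (W n)) : ℝ)
        + b * (inner ℝ (A (W n) - v) (A (H n) - A (W n)) : ℝ)
        ≤ fS - Matrix.trace (C * W n) - (inner ℝ (y n) (A (W n) - v) : ℝ)
          - b * ‖A (W n) - v‖^2 := by
      have e1 : (inner ℝ (y n) (A (H n) - A (W n)) : ℝ)
          = (inner ℝ (y n) (A (H n)) : ℝ) - (inner ℝ (y n) (A (W n)) : ℝ) := inner_sub_right _ _ _
      have e2 : (inner ℝ (A (W n) - v) (A (H n) - A (W n)) : ℝ)
          = (inner ℝ (A (W n) - v) (A (H n)) : ℝ) - (inner ℝ (A (W n) - v) (A (W n)) : ℝ) :=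
        inner_sub_right _ _ _
      have e3 : (inner ℝ (y n) (A (W n) - v) : ℝ)
          = (inner ℝ (y n) (A (W n)) : ℝ) - (inner ℝ (y n) v : ℝ) := inner_sub_right _ _ _
      have e4 : (inner ℝ (A (W n) - v) (A (W n) - v) : ℝ)
          = (inner ℝ (A (W n) - v) (A (W n)) : ℝ) - (inner ℝ (A (W n) - v) v : ℝ) :=
        inner_sub_right _ _ _
      have e5 : ‖A (W n) - v‖^2 = (inner ℝ (A (W n) - v) (A (W n) - v) : ℝ) :=
        (real_inner_self_eq_norm_sq _).symm
      have e3' : (inner ℝ (y n) (A (W n)) : ℝ)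
          = (inner ℝ (y n) (A (W n) - v) : ℝ) + (inner ℝ (y n) v : ℝ) := by rw [e3]; ring
      have e4' : (inner ℝ (A (W n) - v) (A (W n)) : ℝ)
          = ‖A (W n) - v‖^2 + (inner ℝ (A (W n) - v) v : ℝ) := by rw [e5, e4]; ring
      rw [e1, e2, e3', e4']
      ring_nf
      ring_nf at hmin'
      linarith [hmin']
    have hq2 : ‖A (H n) - A (W n)‖^2 ≤ M := by
      have hXent : ∀ i j, |(H n - W n) i j| ≤ 1 := by
        intro i j
        have h1 := mem_cpdelta_entry (hHmem n hn) i j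
        have h2 := mem_cpdelta_entry (hWmem n hn) i j
        rw [Matrix.sub_apply, abs_le]
        constructor <;> linarith [h1.1, h1.2, h2.1, h2.2]
      have hqAl : ‖A (H n) - A (W n)‖ ≤ (p:ℝ) * opNorm A := by
        rw [← map_sub]
        exact norm_apply_le_of_entries hp A _ hXent
      have h0 := norm_nonneg (A (H n) - A (W n))
      rw [hMdef]
      nlinarith
    have hγn := hγ n hn
    rw [← hbdef, ← hηdef] at hγn
    have hγM : γ n * ‖A (W (n+1)) - v‖^2 ≤ b * η^2 * M := by
      rw [hMdef]
      calc γ n * ‖A (W (n+1)) - v‖^2 ≤ b * η^2 * (p:ℝ)^2 * opNorm A^2 := hγn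
        _ = b * η^2 * ((p:ℝ)^2 * opNorm A^2) := by ring
    have hL0exp : Lagr C A v b (W n) (y n)
        = Matrix.trace (C * W n) + (inner ℝ (y n) (A (W n) - v) : ℝ)
          + b/2 * ‖A (W n) - v‖^2 := rfl
    have hL0'exp : Lagr C A v b' (W n) (y n)
        = Matrix.trace (C * W n) + (inner ℝ (y n) (A (W n) - v) : ℝ)
          + b'/2 * ‖A (W n) - v‖^2 := rfl
    have hLexp : Lagr C A v b (W (n+1)) (y n)
        = Lagr C A v b (W n) (y n)
          + η * (Matrix.trace (C * H n) - Matrix.trace (C * W n)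
              + (inner ℝ (y n) (A (H n) - A (W n)) : ℝ)
              + b * (inner ℝ (A (W n) - v) (A (H n) - A (W n)) : ℝ))
          + b*η^2/2 * ‖A (H n) - A (W n)‖^2 := by
      simp only [Lagr]
      rw [htr, hup, hnorm, inner_add_right, real_inner_smul_right]
      ring
    have hdualstep : Lagr C A v b (W (n+1)) (y (n+1))
        = Lagr C A v b (W (n+1)) (y n) + γ n * ‖A (W (n+1)) - v‖^2 := by
      simp only [Lagr]
      rw [hyupd n hn, inner_add_left, real_inner_smul_left, real_inner_self_eq_norm_sq]
      ring
    have hc1 : Lagr C A v b (W (n+1)) (y n) - fS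
        ≤ (1-η) * (Lagr C A v b (W n) (y n) - fS) - η*b/2*‖A (W n) - v‖^2
          + b*η^2/2*M := by
      have m1 := mul_le_mul_of_nonneg_left hbr (le_of_lt hη0)
      have m2 : b*η^2/2 * ‖A (H n) - A (W n)‖^2 ≤ b*η^2/2 * M :=
        mul_le_mul_of_nonneg_left hq2 (by positivity)
      have hR : η * (fS - Matrix.trace (C * W n) - (inner ℝ (y n) (A (W n) - v) : ℝ)
          - b * ‖A (W n) - v‖^2)
          = η * (fS - Lagr C A v b (W n) (y n)) - η*b/2*‖A (W n) - v‖^2 := by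
        rw [hL0exp]; ring
      have m1' := hR ▸ m1
      have hE : Lagr C A v b (W n) (y n)
            + (η * (fS - Lagr C A v b (W n) (y n)) - η*b/2*‖A (W n) - v‖^2)
            + b*η^2/2*M - fS
          = (1-η) * (Lagr C A v b (W n) (y n) - fS) - η*b/2*‖A (W n) - v‖^2
            + b*η^2/2*M := by ring
      rw [hLexp]
      linarith [m1', m2, hE]
    have hbracket : (1-η)*(b-b') ≤ η*b := by
      have h5 : 0 ≤ b - b' := by
        rw [hbdef, hb'def]
        have := Real.sqrt_le_sqrt (show (n:ℝ) ≤ (n:ℝ)+1 by linarith)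
        nlinarith
      have hsd : Real.sqrt ((n:ℝ)+1) - Real.sqrt (n:ℝ) ≤ 1 / Real.sqrt ((n:ℝ)+1) := by
        have h6 : Real.sqrt (n:ℝ) * Real.sqrt (n:ℝ) ≤ Real.sqrt (n:ℝ) * Real.sqrt ((n:ℝ)+1) :=
          mul_le_mul_of_nonneg_left (Real.sqrt_le_sqrt (by linarith)) (Real.sqrt_nonneg _)
        rw [show (1:ℝ) / Real.sqrt ((n:ℝ)+1) = 1 / Real.sqrt ((n:ℝ)+1) from rfl]
        rw [sub_le_iff_le_add]
        rw [div_add' _ _ _ (ne_of_gt hsqpos), le_div_iff₀ hsqpos]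
        nlinarith [hsq, hsq', h6]
      have h3 : b - b' ≤ β₀ / Real.sqrt ((n:ℝ)+1) := by
        rw [hbdef, hb'def]
        calc β₀ * Real.sqrt ((n:ℝ)+1) - β₀ * Real.sqrt (n:ℝ)
            = β₀ * (Real.sqrt ((n:ℝ)+1) - Real.sqrt (n:ℝ)) := by ring
          _ ≤ β₀ * (1 / Real.sqrt ((n:ℝ)+1)) := mul_le_mul_of_nonneg_left hsd hβ₀.le
          _ = β₀ / Real.sqrt ((n:ℝ)+1) := by ring
      have h4 : β₀ / Real.sqrt ((n:ℝ)+1) ≤ η * b := by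
        rw [div_le_iff₀ hsqpos, hηdef, hbdef]
        have he : 2/((n:ℝ)+1) * (β₀ * Real.sqrt ((n:ℝ)+1)) * Real.sqrt ((n:ℝ)+1)
            = 2*β₀ := by
          field_simp
          nlinarith [hsq]
        rw [he]
        linarith
      calc (1-η)*(b-b') ≤ 1*(b-b') := mul_le_mul_of_nonneg_right (by linarith) h5
        _ = b - b' := one_mul _
        _ ≤ β₀ / Real.sqrt ((n:ℝ)+1) := h3
        _ ≤ η*b := h4
    have e6 : b * η^2 * M * (3/2) = 6*β₀*M/(((n:ℝ)+1)*Real.sqrt ((n:ℝ)+1)) := by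
      rw [hbdef, hηdef, eq_div_iff (by positivity)]
      have hs := hsq
      have hsp := hsqpos
      generalize Real.sqrt ((n:ℝ)+1) = s at hs hsp ⊢
      rw [← hs]
      have hs0 : s ≠ 0 := hsp.ne'
      field_simp
      ring
    have c6 : (1-η)*((b-b')/2*‖A (W n) - v‖^2) - η*b/2*‖A (W n) - v‖^2 ≤ 0 := by
      have hX0 : (0:ℝ) ≤ ‖A (W n) - v‖^2 := sq_nonneg _
      nlinarith [mul_le_mul_of_nonneg_right hbracket hX0]
    have c4 : Lagr C A v b (W n) (y n) - fS
        = (Lagr C A v b' (W n) (y n) - fS) + (b-b')/2*‖A (W n) - v‖^2 := by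
      rw [hL0exp, hL0'exp]; ring
    have c5 : (1-η)*(Lagr C A v b (W n) (y n) - fS)
        = (1-η)*(Lagr C A v b' (W n) (y n) - fS)
          + (1-η)*((b-b')/2*‖A (W n) - v‖^2) := by
      rw [c4]; ring
    have c2 : Lagr C A v b (W (n+1)) (y (n+1)) - fS
        ≤ Lagr C A v b (W (n+1)) (y n) - fS + b*η^2*M := by
      rw [hdualstep]; linarith [hγM]
    have c8 : b*η^2/2*M + b*η^2*M = b*η^2*M*(3/2) := by ring
    linarith [c2, hc1, c5, c6, e6, c8]
  -- decay of the Lagrangian error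
  have hΔ : ∀ n : ℕ, 2 ≤ n →
      Lagr C A v (β₀ * Real.sqrt (n:ℝ)) (W n) (y n) - fS ≤ K / Real.sqrt (n:ℝ) := by
    intro n hn
    induction n with
    | zero => omega
    | succ m ih =>
      rcases Nat.lt_or_ge m 2 with hm | hm
      · -- base case : m = 1
        have hm1 : m = 1 := by omega
        subst hm1
        have h1 := hstep 1 le_rfl
        norm_num at h1 ⊢
        have hs2 : (0:ℝ) < Real.sqrt 2 := Real.sqrt_pos.mpr (by norm_num)
        have h2 : 6*β₀*M/(2*Real.sqrt 2) ≤ K / Real.sqrt 2 := by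
          rw [hKdef]
          apply div_le_div_of_nonneg_left ?_ hs2 ?_
          · positivity
          · nlinarith
        linarith [h1, h2]
      · -- inductive step : m ≥ 2
        have hm2 : (2:ℝ) ≤ (m:ℝ) := by exact_mod_cast hm
        have h1 := hstep m (by omega)
        have h2 := ih hm
        push_cast
        set c : ℝ := Real.sqrt (m:ℝ) with hcdef
        set c' : ℝ := Real.sqrt ((m:ℝ)+1) with hc'def
        have hc0 : 0 < c := Real.sqrt_pos.mpr (by linarith)
        have hc'0 : 0 < c' := Real.sqrt_pos.mpr (by linarith)
        have hcc : c * c = (m:ℝ) := Real.mul_self_sqrt (by linarith)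
        have hcc' : c' * c' = (m:ℝ)+1 := Real.mul_self_sqrt (by linarith)
        have key : ((m:ℝ)-1) * c' ≤ (m:ℝ) * c := by
          have hq1 : ((m:ℝ)-1)^2 * ((m:ℝ)+1) ≤ (m:ℝ)^2 * (m:ℝ) := by nlinarith
          calc ((m:ℝ)-1) * c' = Real.sqrt (((m:ℝ)-1)^2 * ((m:ℝ)+1)) := by
                rw [Real.sqrt_mul (sq_nonneg _), Real.sqrt_sq (by linarith : (0:ℝ) ≤ (m:ℝ)-1),
                  hc'def]
            _ ≤ Real.sqrt ((m:ℝ)^2 * (m:ℝ)) := Real.sqrt_le_sqrt hq1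
            _ = (m:ℝ) * c := by
                rw [Real.sqrt_mul (sq_nonneg _), Real.sqrt_sq (by linarith : (0:ℝ) ≤ (m:ℝ)),
                  hcdef]
        have hη : (0:ℝ) ≤ 1 - 2/((m:ℝ)+1) := by
          have : 2/((m:ℝ)+1) ≤ 1 := by rw [div_le_one (by linarith)]; linarith
          linarith
        have t1 : (1 - 2/((m:ℝ)+1)) * (Lagr C A v (β₀ * c) (W m) (y m) - fS)
            ≤ (1 - 2/((m:ℝ)+1)) * (K / c) := mul_le_mul_of_nonneg_left h2 hη
        have hd : (1 - 2/((m:ℝ)+1)) * (K/c) + K/(((m:ℝ)+1)*c') - K/c'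
            = (K*(((m:ℝ)-1)*c' + c) - K*(((m:ℝ)+1)*c)) / (((m:ℝ)+1)*c*c') := by
          field_simp
          ring
        have hnum : K*(((m:ℝ)-1)*c' + c) - K*(((m:ℝ)+1)*c) ≤ 0 := by
          have hS : ((m:ℝ)-1)*c' + c ≤ ((m:ℝ)+1)*c := by nlinarith
          nlinarith [mul_le_mul_of_nonneg_left hS hK0]
        have t2 : (1 - 2/((m:ℝ)+1)) * (K/c) + K/(((m:ℝ)+1)*c') ≤ K/c' := by
          have hdiv : (K*(((m:ℝ)-1)*c' + c) - K*(((m:ℝ)+1)*c)) / (((m:ℝ)+1)*c*c') ≤ 0 :=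
            div_nonpos_of_nonpos_of_nonneg hnum (by positivity)
          linarith [hd ▸ hdiv]
        have hKM : 6*β₀*M/(((m:ℝ)+1)*c') = K/(((m:ℝ)+1)*c') := by rw [hKdef]
        linarith [h1, t1, t2, hKM ▸ (le_refl (K/(((m:ℝ)+1)*c')))]
  -- extraction of the infeasibility bound
  intro t ht
  have ht2 : (2:ℝ) ≤ (t:ℝ) := by exact_mod_cast ht
  set s : ℝ := Real.sqrt (t:ℝ) with hsdef
  have hs0 : 0 < s := Real.sqrt_pos.mpr (by linarith)
  have hss : s * s = (t:ℝ) := Real.mul_self_sqrt (by linarith)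
  set r : ℝ := ‖A (W t) - v‖ with hrdef
  have hr0 : 0 ≤ r := norm_nonneg _
  have hD0 : 0 ≤ D := le_trans (norm_nonneg ystar) hystarD
  have hWt := hWmem t (by omega)
  have hd1 : fS ≤ Matrix.trace (C * W t) + (inner ℝ ystar (A (W t) - v) : ℝ) := by
    have h := hdual (W t) hWt
    rw [euclid_inner]
    exact h
  have hip1 : (inner ℝ ystar (A (W t) - v) : ℝ) ≤ D * r := by
    have h := real_inner_le_norm ystar (A (W t) - v)
    rw [← hrdef] at h
    nlinarith
  have hip2 : -(D*r) ≤ (inner ℝ (y t) (A (W t) - v) : ℝ) := by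
    have h1 := abs_real_inner_le_norm (y t) (A (W t) - v)
    rw [← hrdef] at h1
    have h2 := neg_abs_le (inner ℝ (y t) (A (W t) - v) : ℝ)
    have h3 := hyD t (by omega)
    nlinarith
  have hΔt := hΔ t ht
  have hLt : Lagr C A v (β₀ * Real.sqrt (t:ℝ)) (W t) (y t) =
      Matrix.trace (C * W t) + (inner ℝ (y t) (A (W t) - v) : ℝ) + (β₀*s)/2 * r^2 := by
    rw [hsdef, hrdef]
    simp only [Lagr]
  rw [hLt] at hΔt
  have hquad : (β₀*s/2) * r^2 ≤ (2*D)*r + K/s := by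
    rw [← hsdef] at hΔt
    linarith
  have hqb := quad_bound (by positivity) (by linarith : (0:ℝ) ≤ 2*D) (by positivity)
    hr0 hquad
  have h3 : Real.sqrt 3 * Real.sqrt 3 = 3 := Real.mul_self_sqrt (by norm_num)
  have e1 : (2*D)/(β₀*s/2) = 1/s * (4*D/β₀) := by
    field_simp
    ring
  have e2 : (K/s)/(β₀*s/2) = (2*Real.sqrt 3*(p:ℝ)*opNorm A/s)^2 := by
    rw [hKdef, hMdef]
    field_simp
    ring_nf
    rw [Real.sq_sqrt (show (0:ℝ) ≤ 3 by norm_num)]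
    ring
  have e3 : Real.sqrt ((K/s)/(β₀*s/2)) = 2*Real.sqrt 3*(p:ℝ)*opNorm A/s := by
    rw [e2, Real.sqrt_sq (by positivity)]
  rw [e1, e3] at hqb
  calc r ≤ 1/s * (4*D/β₀) + 2*Real.sqrt 3*(p:ℝ)*opNorm A/s := hqb
    _ = 1/s * (2*Real.sqrt 3*(p:ℝ)*opNorm A + 4*D/β₀) := by ring
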